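/- Let G = (V1 ∪ V2, E) be a bipartite graph with girth at least 8 in which every left vertex has degree at least k. Then for any multiset of k requests for left vertices (i.e., a function assigning to each left vertex x a multiplicity k_x ≥ 0 with Σ k_x = k), there exists a family of pairwise disjoint sets of vertices S_1, ..., S_k such that each request for a left vertex x is served either by the singleton {x} (used at most once per x) or by some repair group R(x,c) = {c} ∪ (N(c) \ {x}) of x. -/

import Mathlib

def No4Cycle {V1 V2 : Type*} (E : V1 → V2 → Prop) : Prop :=
  ∀ x1 x2 c1 c2, x1 ≠ x2 → c1 ≠ c2 → E x1 c1 → E x1 c2 → E x2 c1 → E x2 c2 → False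

def No6Cycle {V1 V2 : Type*} (E : V1 → V2 → Prop) : Prop :=
  ∀ x1 x2 x3 c1 c2 c3, x1 ≠ x2 → x1 ≠ x3 → x2 ≠ x3 → c1 ≠ c2 → c1 ≠ c3 → c2 ≠ c3 →
    E x1 c1 → E x2 c1 → E x2 c2 → E x3 c2 → E x3 c3 → E x1 c3 → False

def repairGroup {V1 V2 : Type*} (E : V1 → V2 → Prop) (x : V1) (c : V2) : Set (V1 ⊕ V2) :=
  {Sum.inr c} ∪ Sum.inl '' {y : V1 | E y c ∧ y ≠ x}

lemma mem_repairGroup_inl {V1 V2 : Type*} (E : V1 → V2 → Prop) (x y : V1) (c : V2) :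
    Sum.inl y ∈ repairGroup E x c ↔ (E y c ∧ y ≠ x) := by
  simp [repairGroup]

lemma mem_repairGroup_inr {V1 V2 : Type*} (E : V1 → V2 → Prop) (x : V1) (c d : V2) :
    Sum.inr d ∈ repairGroup E x c ↔ d = c := by
  simp [repairGroup]

/-- Key combinatorial lemma: greedy choice of repair-group centers. -/
lemma key_choice {V1 V2 : Type*} (E : V1 → V2 → Prop) (k : ℕ)
    (h4 : No4Cycle E) (h6 : No6Cycle E)
    (hdeg : ∀ x : V1, ∃ s : Finset V2, k ≤ s.card ∧ ∀ c ∈ s, E x c)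
    (W : Finset V1) (m : V1 → ℕ) (hm : ∀ x ∈ W, 1 ≤ m x) (hsum : ∑ x ∈ W, m x ≤ k) :
    ∀ T : Finset V1, T ⊆ W → ∃ C : V1 → Finset V2,
      (∀ x ∈ T, (C x).card = m x - 1) ∧
      (∀ x ∈ T, ∀ c ∈ C x, E x c) ∧
      (∀ x ∈ T, ∀ c ∈ C x, ∀ z ∈ W, z ≠ x → ¬ E z c) ∧
      (∀ x ∈ T, ∀ x' ∈ T, x ≠ x' → ∀ c ∈ C x, ∀ c' ∈ C x', ∀ y, ¬ (E y c ∧ E y c')) := by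
  classical
  have hsumW : ∑ x ∈ W, (m x - 1) + W.card ≤ k := by
    have h1 : ∑ x ∈ W, ((m x - 1) + 1) = ∑ x ∈ W, m x :=
      Finset.sum_congr rfl fun x hx => by have := hm x hx; omega
    rw [Finset.sum_add_distrib] at h1
    simp only [Finset.sum_const, smul_eq_mul, mul_one] at h1
    omega
  intro T
  induction T using Finset.induction_on with
  | empty =>
    intro _
    exact ⟨fun _ => ∅, by simp, by simp, by simp, by simp⟩
  | @insert x T' hxT' ih =>
    intro hsub
    have hsub' : T' ⊆ W := fun z hz => hsub (Finset.mem_insert_of_mem hz)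
    obtain ⟨C', hc1, hc2, hc3, hc4⟩ := ih hsub'
    obtain ⟨s, hs, hsE⟩ := hdeg x
    have hxW : x ∈ W := hsub (Finset.mem_insert_self x T')
    set B : Finset V2 := s.filter (fun c =>
      (∃ z ∈ W.erase x, E z c) ∨ ∃ x' ∈ T', ∃ c' ∈ C' x', ∃ y, E y c ∧ E y c') with hB
    -- each "bad event" kills at most one candidate
    have hcard1 : ∀ z ∈ W.erase x, (s.filter (fun c => E z c)).card ≤ 1 := by
      intro z hz
      rw [Finset.card_le_one]
      intro c1 hc1' c2 hc2'
      rw [Finset.mem_filter] at hc1' hc2'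
      by_contra hne
      exact h4 x z c1 c2 (fun h => (Finset.mem_erase.mp hz).1 h.symm) hne
        (hsE c1 hc1'.1) (hsE c2 hc2'.1) hc1'.2 hc2'.2
    have hcard2 : ∀ x' ∈ T', ∀ c' ∈ C' x',
        (s.filter (fun c => ∃ y, E y c ∧ E y c')).card ≤ 1 := by
      intro x' hx' c' hcc'
      have hxx' : x ≠ x' := fun h => hxT' (h ▸ hx')
      have hxc' : ¬ E x c' := hc3 x' hx' c' hcc' x hxW hxx'
      rw [Finset.card_le_one]
      intro c1 hc1' c2 hc2'
      rw [Finset.mem_filter] at hc1' hc2'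
      by_contra hne
      obtain ⟨y1, hy1c1, hy1c'⟩ := hc1'.2
      obtain ⟨y2, hy2c2, hy2c'⟩ := hc2'.2
      have hExc1 : E x c1 := hsE c1 hc1'.1
      have hExc2 : E x c2 := hsE c2 hc2'.1
      have hy1x : y1 ≠ x := fun h => hxc' (h ▸ hy1c')
      have hy2x : y2 ≠ x := fun h => hxc' (h ▸ hy2c')
      have hc'c1 : c' ≠ c1 := fun h => hxc' (h ▸ hExc1)
      have hc'c2 : c' ≠ c2 := fun h => hxc' (h ▸ hExc2)
      by_cases hy : y1 = y2
      · exact h4 x y1 c1 c2 (fun h => hy1x h.symm) hne hExc1 hExc2 hy1c1 (hy ▸ hy2c2)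
      · exact h6 x y1 y2 c1 c' c2 (fun h => hy1x h.symm) (fun h => hy2x h.symm) hy
          (Ne.symm hc'c1) hne hc'c2 hExc1 hy1c1 hy1c' hy2c' hy2c2 hExc2
    -- bound the number of bad candidates
    have hBsub : B ⊆ (W.erase x).biUnion (fun z => s.filter (fun c => E z c)) ∪
        T'.biUnion (fun x' => (C' x').biUnion
          (fun c' => s.filter (fun c => ∃ y, E y c ∧ E y c'))) := by
      intro c hc
      rw [hB, Finset.mem_filter] at hc
      obtain ⟨hcs, hbad⟩ := hc
      rcases hbad with ⟨z, hz, hzc⟩ | ⟨x', hx', c', hcc', hy⟩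
      · exact Finset.mem_union_left _ (Finset.mem_biUnion.mpr
          ⟨z, hz, Finset.mem_filter.mpr ⟨hcs, hzc⟩⟩)
      · exact Finset.mem_union_right _ (Finset.mem_biUnion.mpr
          ⟨x', hx', Finset.mem_biUnion.mpr ⟨c', hcc', Finset.mem_filter.mpr ⟨hcs, hy⟩⟩⟩)
    have hBcard : B.card ≤ (W.card - 1) + ∑ x' ∈ T', (m x' - 1) := by
      have h1 : ((W.erase x).biUnion (fun z => s.filter (fun c => E z c))).card ≤ W.card - 1 := by
        calc _ ≤ ∑ z ∈ W.erase x, (s.filter (fun c => E z c)).card := Finset.card_biUnion_le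
          _ ≤ ∑ _z ∈ W.erase x, 1 := Finset.sum_le_sum hcard1
          _ = (W.erase x).card := by simp
          _ = W.card - 1 := Finset.card_erase_of_mem hxW
      have h2 : (T'.biUnion (fun x' => (C' x').biUnion
          (fun c' => s.filter (fun c => ∃ y, E y c ∧ E y c')))).card ≤
          ∑ x' ∈ T', (m x' - 1) := by
        calc _ ≤ ∑ x' ∈ T', ((C' x').biUnion
              (fun c' => s.filter (fun c => ∃ y, E y c ∧ E y c'))).card :=
            Finset.card_biUnion_le
          _ ≤ ∑ x' ∈ T', (m x' - 1) := by
            apply Finset.sum_le_sum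
            intro x' hx'
            calc _ ≤ ∑ c' ∈ C' x', (s.filter (fun c => ∃ y, E y c ∧ E y c')).card :=
                Finset.card_biUnion_le
              _ ≤ ∑ _c' ∈ C' x', 1 := Finset.sum_le_sum (hcard2 x' hx')
              _ = (C' x').card := by simp
              _ = m x' - 1 := hc1 x' hx'
      calc B.card ≤ _ := Finset.card_le_card hBsub
        _ ≤ _ := Finset.card_union_le _ _
        _ ≤ (W.card - 1) + ∑ x' ∈ T', (m x' - 1) := Nat.add_le_add h1 h2
    -- there are enough good candidates
    have hBs : B ⊆ s := Finset.filter_subset _ _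
    have hle : m x - 1 ≤ (s \ B).card := by
      rw [Finset.card_sdiff_of_subset hBs]
      have hins : (m x - 1) + ∑ x' ∈ T', (m x' - 1) ≤ ∑ z ∈ W, (m z - 1) := by
        have heq := Finset.sum_insert (f := fun z => m z - 1) hxT'
        rw [← heq]
        exact Finset.sum_le_sum_of_subset hsub
      have hWpos : 1 ≤ W.card := Finset.card_pos.mpr ⟨x, hxW⟩
      omega
    obtain ⟨Cx, hCxsub, hCxcard⟩ := Finset.exists_subset_card_eq hle
    have hCxs : ∀ c ∈ Cx, c ∈ s := fun c hc => (Finset.mem_sdiff.mp (hCxsub hc)).1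
    have hCxnB : ∀ c ∈ Cx, c ∉ B := fun c hc => (Finset.mem_sdiff.mp (hCxsub hc)).2
    have hne' : ∀ z ∈ T', z ≠ x := fun z hz h => hxT' (h ▸ hz)
    refine ⟨fun z => if z = x then Cx else C' z, ?_, ?_, ?_, ?_⟩
    · intro z hz
      dsimp only
      rcases Finset.mem_insert.mp hz with rfl | hz'
      · rw [if_pos rfl]; exact hCxcard
      · rw [if_neg (hne' z hz')]; exact hc1 z hz'
    · intro z hz c hc
      dsimp only at hc
      rcases Finset.mem_insert.mp hz with rfl | hz'
      · rw [if_pos rfl] at hc; exact hsE c (hCxs c hc)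
      · rw [if_neg (hne' z hz')] at hc; exact hc2 z hz' c hc
    · intro z hz c hc w hw hwz hEwc
      dsimp only at hc
      rcases Finset.mem_insert.mp hz with rfl | hz'
      · rw [if_pos rfl] at hc
        exact hCxnB c hc (Finset.mem_filter.mpr ⟨hCxs c hc,
          Or.inl ⟨w, Finset.mem_erase.mpr ⟨hwz, hw⟩, hEwc⟩⟩)
      · rw [if_neg (hne' z hz')] at hc
        exact hc3 z hz' c hc w hw hwz hEwc
    · intro z hz z' hz' hzz' c hc d hd y ⟨hyc, hyd⟩
      dsimp only at hc hd
      rcases Finset.mem_insert.mp hz with rfl | hz1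
      · rw [if_pos rfl] at hc
        rcases Finset.mem_insert.mp hz' with rfl | hz1'
        · exact hzz' rfl
        · rw [if_neg (hne' z' hz1')] at hd
          exact hCxnB c hc (Finset.mem_filter.mpr ⟨hCxs c hc,
            Or.inr ⟨z', hz1', d, hd, y, hyc, hyd⟩⟩)
      · rw [if_neg (hne' z hz1)] at hc
        rcases Finset.mem_insert.mp hz' with rfl | hz1'
        · rw [if_pos rfl] at hd
          exact hCxnB d hd (Finset.mem_filter.mpr ⟨hCxs d hd,
            Or.inr ⟨z, hz1, c, hc, y, hyd, hyc⟩⟩)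
        · rw [if_neg (hne' z' hz1')] at hd
          exact hc4 z hz1 z' hz1' hzz' c hc d hd y ⟨hyc, hyd⟩

lemma list_get_cast {α : Type*} {l l' : List α} (h : l = l') (n : ℕ)
    (hn : n < l.length) (hn' : n < l'.length) : l.get ⟨n, hn⟩ = l'.get ⟨n, hn'⟩ := by
  subst h; rfl

/-- In a bipartite graph with girth at least 8 in which every left vertex has degree
at least `k`, any multiset of `k` read requests for left vertices (given as a
function `req : Fin k → V1`) can be served by pairwise disjoint sets of vertices,
each being either the singleton of the requested vertex or one of its repair groups. -/
theorem stmt_2 {V1 V2 : Type*} (E : V1 → V2 → Prop) (k : ℕ)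
    (h4 : No4Cycle E) (h6 : No6Cycle E)
    (hdeg : ∀ x : V1, ∃ s : Finset V2, k ≤ s.card ∧ ∀ c ∈ s, E x c)
    (req : Fin k → V1) :
    ∃ S : Fin k → Set (V1 ⊕ V2),
      (∀ i j : Fin k, i ≠ j → Disjoint (S i) (S j)) ∧
      ∀ i : Fin k,
        S i = {Sum.inl (req i)} ∨
        ∃ c : V2, E (req i) c ∧ S i = repairGroup E (req i) c := by
  classical
  set W : Finset V1 := Finset.univ.image req with hW
  set m : V1 → ℕ := fun x => (Finset.univ.filter (fun j => req j = x)).card with hmdef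
  have hmem : ∀ i, req i ∈ W := fun i => Finset.mem_image_of_mem req (Finset.mem_univ i)
  have hm : ∀ x ∈ W, 1 ≤ m x := by
    intro x hx
    rw [hW, Finset.mem_image] at hx
    obtain ⟨j, _, rfl⟩ := hx
    exact Finset.card_pos.mpr ⟨j, by simp⟩
  have hsum : ∑ x ∈ W, m x ≤ k := by
    have h := (Finset.card_eq_sum_card_image req (Finset.univ : Finset (Fin k))).symm
    simp only [Finset.card_univ, Fintype.card_fin] at h
    exact le_of_eq h
  obtain ⟨C, hC1, hC2, hC3, hC4⟩ := key_choice E k h4 h6 hdeg W m hm hsum W subset_rfl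
  set cnt : Fin k → ℕ := fun i => (Finset.univ.filter (fun j => req j = req i ∧ j < i)).card
    with hcnt
  have hcnt_lt : ∀ i, cnt i < m (req i) := by
    intro i
    apply Finset.card_lt_card
    constructor
    · intro j hj
      rw [Finset.mem_filter] at hj ⊢
      exact ⟨hj.1, hj.2.1⟩
    · intro hcon
      have hi : i ∈ Finset.univ.filter (fun j => req j = req i) := by simp
      have := hcon hi
      rw [Finset.mem_filter] at this
      exact absurd this.2.2 (lt_irrefl i)
  have hcnt_inj : ∀ i j : Fin k, req i = req j → i < j → cnt i < cnt j := by
    intro i j hr hij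
    apply Finset.card_lt_card
    constructor
    · intro j' hj'
      rw [Finset.mem_filter] at hj' ⊢
      exact ⟨Finset.mem_univ _, hr ▸ hj'.2.1, lt_trans hj'.2.2 hij⟩
    · intro hcon
      have hi : i ∈ Finset.univ.filter (fun j' => req j' = req j ∧ j' < j) := by
        rw [Finset.mem_filter]
        exact ⟨Finset.mem_univ _, hr, hij⟩
      have := hcon hi
      rw [Finset.mem_filter] at this
      exact absurd this.2.2 (lt_irrefl i)
  have hcnt_ne : ∀ i j : Fin k, i ≠ j → req i = req j → cnt i ≠ cnt j := by
    intro i j hij hr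
    rcases lt_trichotomy i j with h | h | h
    · exact Nat.ne_of_lt (hcnt_inj i j hr h)
    · exact absurd h hij
    · exact (Nat.ne_of_lt (hcnt_inj j i hr.symm h)).symm
  have pfbound : ∀ i : Fin k, cnt i ≠ 0 → cnt i - 1 < ((C (req i)).toList).length := by
    intro i h
    rw [Finset.length_toList, hC1 (req i) (hmem i)]
    have h1 := hcnt_lt i
    have h2 := hm (req i) (hmem i)
    omega
  let pick : ∀ i : Fin k, cnt i ≠ 0 → V2 :=
    fun i h => ((C (req i)).toList).get ⟨cnt i - 1, pfbound i h⟩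
  have pick_mem : ∀ i h, pick i h ∈ C (req i) :=
    fun i h => Finset.mem_toList.mp (List.get_mem _ _)
  have pick_E : ∀ i h, E (req i) (pick i h) :=
    fun i h => hC2 _ (hmem i) _ (pick_mem i h)
  have pick_ne : ∀ (i j : Fin k) (hi : cnt i ≠ 0) (hj : cnt j ≠ 0),
      req i = req j → cnt i ≠ cnt j → pick i hi ≠ pick j hj := by
    intro i j hi hj hr hne heq
    have hl : (C (req i)).toList = (C (req j)).toList := by rw [hr]
    have hb : cnt i - 1 < ((C (req j)).toList).length := hl ▸ pfbound i hi
    have h1 : pick i hi = ((C (req j)).toList).get ⟨cnt i - 1, hb⟩ :=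
      list_get_cast hl _ _ _
    have h2 : ((C (req j)).toList).get ⟨cnt i - 1, hb⟩ = ((C (req j)).toList).get
        ⟨cnt j - 1, pfbound j hj⟩ := by rw [← h1]; exact heq
    rw [(Finset.nodup_toList _).get_inj_iff] at h2
    have h3 := congrArg Fin.val h2
    simp only at h3
    omega
  refine ⟨fun i => if h : cnt i = 0 then {Sum.inl (req i)}
    else repairGroup E (req i) (pick i h), ?_, ?_⟩
  · intro i j hij
    rw [Set.disjoint_left]
    intro a ha hb
    dsimp only at ha hb
    by_cases hi : cnt i = 0 <;> by_cases hj : cnt j = 0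
    · rw [dif_pos hi] at ha; rw [dif_pos hj] at hb
      rw [Set.mem_singleton_iff] at ha hb
      have : req i = req j := Sum.inl.inj (ha ▸ hb)
      exact hcnt_ne i j hij this (hi.trans hj.symm)
    · rw [dif_pos hi] at ha; rw [dif_neg hj] at hb
      rw [Set.mem_singleton_iff] at ha
      subst ha
      rw [mem_repairGroup_inl] at hb
      exact hC3 (req j) (hmem j) _ (pick_mem j hj) (req i) (hmem i) hb.2 hb.1
    · rw [dif_neg hi] at ha; rw [dif_pos hj] at hb
      rw [Set.mem_singleton_iff] at hb
      subst hb
      rw [mem_repairGroup_inl] at ha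
      exact hC3 (req i) (hmem i) _ (pick_mem i hi) (req j) (hmem j) ha.2 ha.1
    · rw [dif_neg hi] at ha; rw [dif_neg hj] at hb
      by_cases hr : req i = req j
      · have hcne := hcnt_ne i j hij hr
        have hpne := pick_ne i j hi hj hr hcne
        cases a with
        | inl y =>
          rw [mem_repairGroup_inl] at ha hb
          have hEic : E (req i) (pick j hj) := by rw [hr]; exact pick_E j hj
          exact h4 (req i) y (pick i hi) (pick j hj) (Ne.symm ha.2) hpne
            (pick_E i hi) hEic ha.1 hb.1
        | inr d =>
          rw [mem_repairGroup_inr] at ha hb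
          exact hpne (ha ▸ hb ▸ rfl)
      · cases a with
        | inl y =>
          rw [mem_repairGroup_inl] at ha hb
          exact hC4 (req i) (hmem i) (req j) (hmem j) hr _ (pick_mem i hi) _
            (pick_mem j hj) y ⟨ha.1, hb.1⟩
        | inr d =>
          rw [mem_repairGroup_inr] at ha hb
          have : E (req i) (pick j hj) := by rw [← hb, ha]; exact pick_E i hi
          exact hC3 (req j) (hmem j) _ (pick_mem j hj) (req i) (hmem i) hr this
  · intro i
    by_cases h : cnt i = 0
    · left; exact dif_pos h
    · right; exact ⟨pick i h, pick_E i h, dif_neg h⟩
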